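/- arXiv:2008.01417 — 3 statements merged into one kernel-verified Lean document; each statement's English description precedes it below -/
import Mathlib

section
/- Let m > 1, d ≥ 2, t, s, k be integers with gcd(d,t) = 1, 0 ≤ s ≤ m−1, d·s ≡ −t (mod m), and 0 ≤ k ≤ s. Then in the polynomial ring over ℚ with indeterminates a and q, the congruence (a q^t; q^d)_{s−k} · (q^d/a; q^d)_k ≡ (−a)^{s−2k} q^{s(ds−d+2t)/2 + (d−t)k} · (a q^t; q^d)_k · (q^d/a; q^d)_{s−k} holds modulo the m-th cyclotomic polynomial Φ_m(q) (after clearing denominators in a). -/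
open Polynomial Finset

noncomputable def qPoch {F : Type*} [Field F] (x r : F) (k : ℕ) : F :=
  ∏ i ∈ Finset.range k, (1 - x * r ^ i)

noncomputable def qInt {F : Type*} [Field F] (q : F) (z : ℤ) : F :=
  (1 - q ^ z) / (1 - q)

def ratCongr2 (M : Polynomial (RatFunc ℚ)) (x : RatFunc (RatFunc ℚ)) : Prop :=
  ∃ f g : Polynomial (RatFunc ℚ), IsCoprime M g ∧
    x * algebraMap (Polynomial (RatFunc ℚ)) (RatFunc (RatFunc ℚ)) g =
      algebraMap (Polynomial (RatFunc ℚ)) (RatFunc (RatFunc ℚ)) M *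
        algebraMap (Polynomial (RatFunc ℚ)) (RatFunc (RatFunc ℚ)) f

private lemma pow_eq_pow_of_mod {S : Type*} [Monoid S] {z : S} {m : ℕ} (hz : z ^ m = 1)
    {x y : ℕ} (h : x % m = y % m) : z ^ x = z ^ y := by
  conv_lhs => rw [← Nat.div_add_mod x m, pow_add, pow_mul, hz, one_pow, one_mul]
  conv_rhs => rw [← Nat.div_add_mod y m, pow_add, pow_mul, hz, one_pow, one_mul]
  rw [h]

private lemma mod_eq_of_dvd {m x y : ℕ} (h : (m : ℤ) ∣ (x : ℤ) - (y : ℤ)) : x % m = y % m := by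
  have h2 : (x : ℤ) % m = (y : ℤ) % m := Int.modEq_iff_dvd.mpr (by simpa using dvd_neg.mpr h)
  have hx : ((x % m : ℕ) : ℤ) = (x : ℤ) % m := Int.natCast_mod x m
  have hy : ((y % m : ℕ) : ℤ) = (y : ℤ) % m := Int.natCast_mod y m
  omega

private lemma gauss_int (n : ℕ) : 2 * (∑ i ∈ range n, (i : ℤ)) = n * (n - 1) := by
  induction n with
  | zero => simp
  | succ n ih => rw [sum_range_succ, mul_add, ih]; push_cast; ring

private lemma sum_lin_int (tp d n : ℕ) :
    2 * ((∑ i ∈ range n, (tp + d * i) : ℕ) : ℤ) = 2 * n * tp + d * (n * (n - 1)) := by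
  have h0 : ((∑ i ∈ range n, (tp + d * i) : ℕ) : ℤ) = ∑ i ∈ range n, ((tp : ℤ) + d * i) := by
    push_cast; rfl
  rw [h0, Finset.sum_add_distrib, Finset.sum_const, card_range, ← Finset.mul_sum]
  have := gauss_int n
  simp only [nsmul_eq_mul]
  linear_combination (d : ℤ) * this

private lemma qPoch_clear {K : Type*} [Field K] (q c : K) (hq : q ≠ 0) (t : ℤ) (d n : ℕ) :
    qPoch (c * q ^ t) (q ^ (d : ℤ)) n * q ^ ((-t).toNat * n) =
      ∏ i ∈ range n, (q ^ (-t).toNat - c * q ^ (t.toNat + d * i)) := by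
  unfold qPoch
  rw [pow_mul]
  have hc' : (q ^ (-t).toNat) ^ n = ∏ _i ∈ range n, q ^ (-t).toNat := by simp
  rw [hc', ← Finset.prod_mul_distrib]
  refine Finset.prod_congr rfl fun i _ => ?_
  rw [sub_mul, one_mul]
  congr 1
  rw [mul_assoc, mul_assoc]
  congr 1
  rw [← zpow_natCast (q ^ (d:ℤ)) i, ← zpow_mul, ← zpow_natCast q ((-t).toNat),
    ← zpow_add₀ hq, ← zpow_add₀ hq, ← zpow_natCast q (t.toNat + d * i)]
  congr 1
  omega

private lemma qPoch_inv {K : Type*} [Field K] (q c : K) (hq : q ≠ 0) (d n : ℕ) :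
    qPoch (q ^ (d : ℤ) / c) (q ^ (d : ℤ)) n =
      ∏ i ∈ range n, (1 - c⁻¹ * q ^ (d * (i + 1))) := by
  unfold qPoch
  refine Finset.prod_congr rfl fun i _ => ?_
  congr 1
  rw [div_mul_eq_mul_div, div_eq_inv_mul]
  congr 1
  rw [← zpow_natCast (q ^ (d:ℤ)) i, ← zpow_mul, ← zpow_add₀ hq, ← zpow_natCast q (d * (i+1))]
  congr 1
  push_cast
  ring

set_option maxHeartbeats 2000000 in
/-- Lemma 1 of the paper: for `0 ≤ k ≤ s ≤ m-1` with `ds ≡ -t (mod m)`,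
`(aq^t;q^d)_{s-k} (q^d/a;q^d)_k ≡ (-a)^{s-2k} q^{s(ds-d+2t)/2+(d-t)k} (aq^t;q^d)_k (q^d/a;q^d)_{s-k}`
modulo `Φₘ(q)` (after clearing denominators in `a`). -/
theorem stmt0 (m : ℕ) (hm : 1 < m) (d : ℕ) (hd : 2 ≤ d) (t : ℤ)
    (hdt : Int.gcd (d : ℤ) t = 1) (s k : ℕ) (hs : s ≤ m - 1) (hk : k ≤ s)
    (hmod : (d : ℤ) * s ≡ -t [ZMOD (m : ℤ)]) :
    let q : RatFunc (RatFunc ℚ) := RatFunc.X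
    let a : RatFunc (RatFunc ℚ) := RatFunc.C RatFunc.X
    ratCongr2 (cyclotomic m (RatFunc ℚ))
      (qPoch (a * q ^ t) (q ^ (d : ℤ)) (s - k) * qPoch (q ^ (d : ℤ) / a) (q ^ (d : ℤ)) k -
        (-a) ^ ((s : ℤ) - 2 * k) *
          q ^ ((s : ℤ) * ((d : ℤ) * s - d + 2 * t) / 2 + ((d : ℤ) - t) * k) *
          qPoch (a * q ^ t) (q ^ (d : ℤ)) k * qPoch (q ^ (d : ℤ) / a) (q ^ (d : ℤ)) (s - k)) := by
  intro q a
  have hq : q ≠ 0 := RatFunc.X_ne_zero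
  have ha' : (RatFunc.X : RatFunc ℚ) ≠ 0 := RatFunc.X_ne_zero
  set a' : RatFunc ℚ := RatFunc.X with ha'def
  have ha : a ≠ 0 := by
    show RatFunc.C a' ≠ 0
    rw [← RatFunc.algebraMap_C]
    exact RatFunc.algebraMap_ne_zero (by simpa using ha')
  set ψ := algebraMap (Polynomial (RatFunc ℚ)) (RatFunc (RatFunc ℚ)) with hψdef
  have hψX : ψ X = q := RatFunc.algebraMap_X
  have hψC : ∀ x : RatFunc ℚ, ψ (C x) = RatFunc.C x := fun x => RatFunc.algebraMap_C x
  set E : ℤ := (s : ℤ) * ((d : ℤ) * s - d + 2 * t) / 2 + ((d : ℤ) - t) * k with hEdef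
  set tp := t.toNat with htp
  set tm := (-t).toNat with htm
  set B := tm * s + E.natAbs with hBdef
  set P1 : ℕ → Polynomial (RatFunc ℚ) :=
    fun n => ∏ i ∈ range n, ((X : Polynomial (RatFunc ℚ)) ^ tm - C a' * X ^ (tp + d * i)) with hP1
  set P2 : ℕ → Polynomial (RatFunc ℚ) :=
    fun n => ∏ i ∈ range n, (1 - C a'⁻¹ * X ^ (d * (i + 1))) with hP2
  set PL := P1 (s - k) * P2 k * X ^ (tm * k + E.natAbs) with hPL
  set PR := C ((-a') ^ ((s : ℤ) - 2 * k)) * P1 k * P2 (s - k) *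
      X ^ ((E + E.natAbs).toNat + tm * (s - k)) with hPR
  -- mapping lemmas
  have hq1 : ∀ n, qPoch (a * q ^ t) (q ^ (d : ℤ)) n * q ^ (tm * n) = ψ (P1 n) := by
    intro n
    rw [qPoch_clear q a hq t d n, hP1]
    rw [map_prod]
    refine Finset.prod_congr rfl fun i _ => ?_
    rw [map_sub, map_mul, map_pow, map_pow, hψX, hψC]
  have hq2 : ∀ n, qPoch (q ^ (d : ℤ) / a) (q ^ (d : ℤ)) n = ψ (P2 n) := by
    intro n
    rw [qPoch_inv q a hq d n, hP2, map_prod]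
    refine Finset.prod_congr rfl fun i _ => ?_
    rw [map_sub, map_one, map_mul, map_pow, hψX, hψC, map_inv₀]
  have hq3 : (-a) ^ ((s : ℤ) - 2 * k) = ψ (C ((-a') ^ ((s : ℤ) - 2 * k))) := by
    rw [hψC, map_zpow₀, map_neg]
  have hψXpow : ∀ n : ℕ, ψ (X ^ n) = q ^ n := fun n => by rw [map_pow, hψX]
  -- Step A
  have hstepA :
      (qPoch (a * q ^ t) (q ^ (d : ℤ)) (s - k) * qPoch (q ^ (d : ℤ) / a) (q ^ (d : ℤ)) k -
        (-a) ^ ((s : ℤ) - 2 * k) * q ^ E *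
          qPoch (a * q ^ t) (q ^ (d : ℤ)) k * qPoch (q ^ (d : ℤ) / a) (q ^ (d : ℤ)) (s - k)) *
        q ^ B = ψ (PL - PR) := by
    rw [map_sub, sub_mul]
    congr 1
    · -- left part
      have hBL : B = tm * (s - k) + (tm * k + E.natAbs) := by
        have h1 : s - k + k = s := by omega
        calc B = tm * (s - k + k) + E.natAbs := by rw [h1]
          _ = tm * (s - k) + (tm * k + E.natAbs) := by ring
      calc qPoch (a * q ^ t) (q ^ (d : ℤ)) (s - k) * qPoch (q ^ (d : ℤ) / a) (q ^ (d : ℤ)) k * q ^ B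
          = (qPoch (a * q ^ t) (q ^ (d : ℤ)) (s - k) * q ^ (tm * (s - k))) *
              qPoch (q ^ (d : ℤ) / a) (q ^ (d : ℤ)) k * q ^ (tm * k + E.natAbs) := by
            rw [hBL, pow_add]; ring
        _ = ψ (P1 (s - k)) * ψ (P2 k) * ψ (X ^ (tm * k + E.natAbs)) := by
            rw [hq1, hq2, hψXpow]
        _ = ψ PL := by rw [hPL, map_mul, map_mul]
    · -- right part
      have hBR : B = tm * k + (tm * (s - k) + E.natAbs) := by
        have h1 : k + (s - k) = s := by omega
        calc B = tm * (k + (s - k)) + E.natAbs := by rw [h1]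
          _ = tm * k + (tm * (s - k) + E.natAbs) := by ring
      have hqE : q ^ E * q ^ (tm * (s - k) + E.natAbs) =
          q ^ ((E + E.natAbs).toNat + tm * (s - k)) := by
        rw [← zpow_natCast q (tm * (s - k) + E.natAbs), ← zpow_add₀ hq,
          ← zpow_natCast q ((E + E.natAbs).toNat + tm * (s - k))]
        congr 1
        omega
      calc (-a) ^ ((s : ℤ) - 2 * k) * q ^ E * qPoch (a * q ^ t) (q ^ (d : ℤ)) k *
            qPoch (q ^ (d : ℤ) / a) (q ^ (d : ℤ)) (s - k) * q ^ B
          = (-a) ^ ((s : ℤ) - 2 * k) * (qPoch (a * q ^ t) (q ^ (d : ℤ)) k * q ^ (tm * k)) *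
              qPoch (q ^ (d : ℤ) / a) (q ^ (d : ℤ)) (s - k) *
              (q ^ E * q ^ (tm * (s - k) + E.natAbs)) := by
            rw [hBR, pow_add]; ring
        _ = ψ (C ((-a') ^ ((s : ℤ) - 2 * k))) * ψ (P1 k) * ψ (P2 (s - k)) *
              ψ (X ^ ((E + E.natAbs).toNat + tm * (s - k))) := by
            rw [hq3, hq1, hq2, hqE, hψXpow]
        _ = ψ PR := by rw [hPR, map_mul, map_mul, map_mul]
  -- Step B
  have hstepB : ((X : Polynomial (RatFunc ℚ)) ^ m - 1) ∣ (PL - PR) := by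
    rw [← Ideal.mem_span_singleton, ← Ideal.Quotient.eq_zero_iff_mem, map_sub, sub_eq_zero]
    set μ := Ideal.Quotient.mk (Ideal.span {(X : Polynomial (RatFunc ℚ)) ^ m - 1}) with hμ
    set z := μ X with hzdef
    have hz : z ^ m = 1 := by
      have h0 : μ ((X : Polynomial (RatFunc ℚ)) ^ m - 1) = 0 :=
        Ideal.Quotient.eq_zero_iff_mem.mpr (Ideal.subset_span (by simp))
      rw [map_sub, map_pow, map_one, sub_eq_zero] at h0
      exact h0
    set α := μ (C a') with hα
    set β := μ (C a'⁻¹) with hβ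
    have hαβ : α * β = 1 := by
      rw [hα, hβ, ← map_mul, ← C_mul, mul_inv_cancel₀ ha', C_1, map_one]
    have hdvdm : (m : ℤ) ∣ (-t - (d : ℤ) * s) := hmod.dvd
    have hzz : ∀ i : ℕ, i ≤ s → z ^ (tp + d * i + d * (s - i)) = z ^ tm := by
      intro i hi
      have h1 : d * i + d * (s - i) = d * s := by
        rw [← Nat.mul_add]; congr 1; omega
      have h2 : tp + d * i + d * (s - i) = tp + d * s := by rw [add_assoc, h1]
      rw [h2]
      refine pow_eq_pow_of_mod hz (mod_eq_of_dvd ?_)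
      have h3 : ((tp + d * s : ℕ) : ℤ) - (tm : ℤ) = -(-t - (d : ℤ) * s) := by
        push_cast
        have h4 : (tp : ℤ) - tm = t := by omega
        linarith
      rw [h3]
      exact dvd_neg.mpr hdvdm
    have hfac : ∀ i : ℕ, i ≤ s →
        z ^ tm - α * z ^ (tp + d * i) =
          -α * z ^ (tp + d * i) * (1 - β * z ^ (d * (s - i))) := by
      intro i hi
      symm
      calc -α * z ^ (tp + d * i) * (1 - β * z ^ (d * (s - i)))
          = -(α * z ^ (tp + d * i)) + (α * β) * (z ^ (tp + d * i) * z ^ (d * (s - i))) := by ring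
        _ = -(α * z ^ (tp + d * i)) + z ^ (tp + d * i + d * (s - i)) := by
            rw [hαβ, one_mul, ← pow_add]
        _ = z ^ tm - α * z ^ (tp + d * i) := by rw [hzz i hi]; ring
    have hμP1 : ∀ n, μ (P1 n) = ∏ i ∈ range n, (z ^ tm - α * z ^ (tp + d * i)) := by
      intro n
      rw [hP1, map_prod]
      exact Finset.prod_congr rfl fun i _ => by rw [map_sub, map_mul, map_pow, map_pow]
    have hμP2 : ∀ n, μ (P2 n) = ∏ i ∈ range n, (1 - β * z ^ (d * (i + 1))) := by
      intro n
      rw [hP2, map_prod]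
      exact Finset.prod_congr rfl fun i _ => by rw [map_sub, map_one, map_mul, map_pow]
    have hside : ∀ j n : ℕ, j + n = s →
        (∏ i ∈ range n, (z ^ tm - α * z ^ (tp + d * i))) *
            ∏ i ∈ range j, (1 - β * z ^ (d * (i + 1))) =
          (-α) ^ n * z ^ (∑ i ∈ range n, (tp + d * i)) *
            ∏ i ∈ range s, (1 - β * z ^ (d * (i + 1))) := by
      intro j n hjn
      have h1 : ∀ i ∈ range n, z ^ tm - α * z ^ (tp + d * i) =
          -α * z ^ (tp + d * i) * (1 - β * z ^ (d * (s - i))) := fun i hi =>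
        hfac i (by rw [mem_range] at hi; omega)
      rw [Finset.prod_congr rfl h1, Finset.prod_mul_distrib, Finset.prod_mul_distrib,
        Finset.prod_const, card_range, Finset.prod_pow_eq_pow_sum]
      have h2 : ∏ i ∈ range n, (1 - β * z ^ (d * (s - i))) =
          ∏ i ∈ range n, (1 - β * z ^ (d * (j + (i + 1)))) := by
        rw [← Finset.prod_range_reflect (fun i => 1 - β * z ^ (d * (j + (i + 1)))) n]
        refine Finset.prod_congr rfl fun i hi => ?_
        rw [mem_range] at hi
        rw [show j + (n - 1 - i + 1) = s - i from by omega]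
      have h3 : (∏ i ∈ range j, (1 - β * z ^ (d * (i + 1)))) *
          ∏ i ∈ range n, (1 - β * z ^ (d * (j + (i + 1)))) =
          ∏ i ∈ range s, (1 - β * z ^ (d * (i + 1))) := by
        rw [← hjn, Finset.prod_range_add]
        simp [add_assoc]
      rw [h2, ← h3]
      ring
    -- scalar identity
    have hsc : μ (C ((-a') ^ ((s : ℤ) - 2 * k))) * (-α) ^ k = (-α) ^ (s - k) := by
      have h1 : -α = μ (C (-a')) := by rw [hα, map_neg, map_neg]
      have h2 : ((-a') ^ ((s : ℤ) - 2 * k)) * (-a') ^ k = (-a') ^ (s - k) := by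
        rw [← zpow_natCast (-a') k, ← zpow_add₀ (neg_ne_zero.mpr ha'), ← zpow_natCast (-a') (s - k)]
        congr 1
        omega
      rw [h1, ← map_pow, ← C_pow, ← map_mul, ← C_mul, h2, C_pow, map_pow]
    -- exponent identity
    have h2E : 2 * E = (s : ℤ) * ((d : ℤ) * s - d + 2 * t) + 2 * ((d : ℤ) - t) * k := by
      have he : (2 : ℤ) ∣ (s : ℤ) * ((d : ℤ) * s - d + 2 * t) := by
        obtain ⟨c, hc⟩ := Int.even_mul_succ_self ((s : ℤ) - 1)
        exact ⟨(d : ℤ) * c + t * s, by linear_combination (d : ℤ) * hc⟩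
      obtain ⟨c, hc⟩ := he
      calc 2 * E = 2 * ((2 * c) / 2 + ((d : ℤ) - t) * k) := by rw [hEdef, hc]
        _ = 2 * (c + ((d : ℤ) - t) * k) := by rw [Int.mul_ediv_cancel_left c two_ne_zero]
        _ = (s : ℤ) * ((d : ℤ) * s - d + 2 * t) + 2 * ((d : ℤ) - t) * k := by
            rw [hc]; ring
    have hexp : z ^ (∑ i ∈ range (s - k), (tp + d * i)) * z ^ (tm * k + E.natAbs) =
        z ^ (∑ i ∈ range k, (tp + d * i)) * z ^ ((E + E.natAbs).toNat + tm * (s - k)) := by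
      rw [← pow_add, ← pow_add]
      refine pow_eq_pow_of_mod hz (mod_eq_of_dvd ?_)
      have hS1 := sum_lin_int tp d (s - k)
      have hS2 := sum_lin_int tp d k
      have h4 : (tp : ℤ) - tm = t := by omega
      have h6 : (((E + E.natAbs).toNat : ℕ) : ℤ) = E + E.natAbs := by omega
      have hfin : (((∑ i ∈ range (s - k), (tp + d * i)) + (tm * k + E.natAbs) : ℕ) : ℤ) -
          (((∑ i ∈ range k, (tp + d * i)) + ((E + E.natAbs).toNat + tm * (s - k)) : ℕ) : ℤ) =
          (k : ℤ) * (-t - (d : ℤ) * s) := by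
        have hmain : 2 * ((((∑ i ∈ range (s - k), (tp + d * i)) + (tm * k + E.natAbs) : ℕ) : ℤ) -
            (((∑ i ∈ range k, (tp + d * i)) + ((E + E.natAbs).toNat + tm * (s - k)) : ℕ) : ℤ)) =
            2 * ((k : ℤ) * (-t - (d : ℤ) * s)) := by
          push_cast [Nat.cast_sub hk] at hS1 hS2 ⊢
          rw [Int.toNat_of_nonneg (by linarith [neg_abs_le E] : (0:ℤ) ≤ E + |E|)]
          linear_combination hS1 - hS2 - h2E + (2 * ((s : ℤ) - 2 * k)) * h4
        exact mul_left_cancel₀ two_ne_zero hmain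
      rw [hfin]
      exact Dvd.dvd.mul_left hdvdm k
    -- put everything together
    rw [hPL, hPR, map_mul, map_mul, map_mul, map_mul, map_mul, map_pow, map_pow,
      hμP1, hμP1, hμP2, hμP2]
    have hL := hside k (s - k) (by omega)
    have hR := hside (s - k) k (by omega)
    calc (∏ i ∈ range (s - k), (z ^ tm - α * z ^ (tp + d * i))) *
          (∏ i ∈ range k, (1 - β * z ^ (d * (i + 1)))) * z ^ (tm * k + E.natAbs)
        = ((-α) ^ (s - k) * z ^ (∑ i ∈ range (s - k), (tp + d * i)) *
            ∏ i ∈ range s, (1 - β * z ^ (d * (i + 1)))) * z ^ (tm * k + E.natAbs) := by rw [hL]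
      _ = ((-α) ^ (s - k)) *
            (z ^ (∑ i ∈ range (s - k), (tp + d * i)) * z ^ (tm * k + E.natAbs)) *
            ∏ i ∈ range s, (1 - β * z ^ (d * (i + 1))) := by ring
      _ = (μ (C ((-a') ^ ((s : ℤ) - 2 * k))) * (-α) ^ k) *
            (z ^ (∑ i ∈ range k, (tp + d * i)) * z ^ ((E + E.natAbs).toNat + tm * (s - k))) *
            ∏ i ∈ range s, (1 - β * z ^ (d * (i + 1))) := by rw [hsc, hexp]
      _ = μ (C ((-a') ^ ((s : ℤ) - 2 * k))) *
            ((∏ i ∈ range k, (z ^ tm - α * z ^ (tp + d * i))) *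
              (∏ i ∈ range (s - k), (1 - β * z ^ (d * (i + 1))))) *
            z ^ ((E + E.natAbs).toNat + tm * (s - k)) := by rw [hR]; ring
      _ = μ (C ((-a') ^ ((s : ℤ) - 2 * k))) *
            (∏ i ∈ range k, (z ^ tm - α * z ^ (tp + d * i))) *
            (∏ i ∈ range (s - k), (1 - β * z ^ (d * (i + 1)))) *
            z ^ ((E + E.natAbs).toNat + tm * (s - k)) := by ring
  -- assemble
  have hdvd2 : cyclotomic m (RatFunc ℚ) ∣ (PL - PR) :=
    dvd_trans (Polynomial.cyclotomic.dvd_X_pow_sub_one m (RatFunc ℚ)) hstepB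
  obtain ⟨f0, hf0⟩ := hdvd2
  refine ⟨f0, X ^ B, ?_, ?_⟩
  · have h1 : ¬ (X : Polynomial (RatFunc ℚ)) ∣ cyclotomic m (RatFunc ℚ) := by
      rw [Polynomial.X_dvd_iff, Polynomial.cyclotomic_coeff_zero _ hm]
      exact one_ne_zero
    exact (((Polynomial.irreducible_X).coprime_iff_not_dvd.mpr h1).symm).pow_right
  · show _ * ψ (X ^ B) = ψ _ * ψ f0
    rw [hψXpow, hstepA, hf0, map_mul]
end

section
/- Let n > 1, d ≥ 2, t be integers with gcd(t,d) = 1, n ≡ t (mod d), and n + d − nd ≤ t ≤ n. Then the sum over k from 0 to (n−t)/d of [2dk+t] · (q^t;q^d)_k^2 (q^{t+n};q^d)_k (q^{t−n};q^d)_k / ((q^d;q^d)_k^2 (q^{d+n};q^d)_k (q^{d−n};q^d)_k) · q^{(d−2t)k} equals exactly ((q^{2t};q^d)_{(n−t)/d} / (q^d;q^d)_{(n−t)/d}) · [n] · q^{t(t−n)/d}. -/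
set_option maxHeartbeats 1600000

open Polynomial Finset

/-- The rational function `x ∈ ℚ(q)` is ≡ 0 modulo the polynomial `M`:
its numerator in lowest terms is divisible by `M`, i.e. `x = M·f/g` with `g` coprime to `M`. -/
def ratCongr (M : Polynomial ℚ) (x : RatFunc ℚ) : Prop :=
  ∃ f g : Polynomial ℚ, IsCoprime M g ∧
    x * algebraMap (Polynomial ℚ) (RatFunc ℚ) g =
      algebraMap (Polynomial ℚ) (RatFunc ℚ) M * algebraMap (Polynomial ℚ) (RatFunc ℚ) f

section
variable {K : Type*} [Field K]

lemma qPoch_succ (x r : K) (k : ℕ) :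
    qPoch x r (k+1) = qPoch x r k * (1 - x * r ^ k) := Finset.prod_range_succ _ _

lemma key1r (a b u V P5 P6 P7 P8 : K)
    (h5 : P5 ≠ 0) (h6 : P6 ≠ 0)
    (hV : 1 - V ≠ 0) (haV : 1 - a * V ≠ 0) (hVu : 1 - a * V * u ≠ 0)
    (hu0 : u ≠ 0) (hV1 : V - 1 ≠ 0)
    (r1 : P6 * (1 - a * V) = P5 * (1 - a * V * u))
    (r2 : P8 * (V - u) = (V - 1) * u * P7) :
    (b - a * V) * (1 - V) * ((1 - a * u ^ 2) * P8 * u / P6)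
      - (1 - a * V) * (b - V) * ((1 - a * u ^ 2) * P7 * u / P5)
    = -V * (1 - a * V) * (1 - a * u) ^ 2 * (1 - b * u) * (V - u) * P8 /
          ((1 - V) * (1 - a * V * u) * P5)
      + V * (1 - a * V) * (1 - u) ^ 2 * (b - a * u) * P8 / ((1 - V) * P5) := by
  have hP6 : P6 = P5 * (1 - a * V * u) / (1 - a * V) := by
    rw [eq_div_iff haV]; exact r1
  have hP7 : P7 = P8 * (V - u) / ((V - 1) * u) := by
    rw [eq_div_iff (mul_ne_zero hV1 hu0)]
    rw [mul_comm ((V - 1) * u) P7] at r2; exact r2.symm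
  rw [hP6, hP7]
  field_simp [h5, hV, haV, hVu, hu0, hV1]
  ring

lemma key2r (a b V P5 P6 P8 : K)
    (h5 : P5 ≠ 0) (h6 : P6 ≠ 0) (hV : 1 - V ≠ 0) (haV : 1 - a * V ≠ 0)
    (hVV : 1 - a * V * V ≠ 0)
    (r1 : P6 * (1 - a * V) = P5 * (1 - a * V * V)) :
    (b - a * V) * (1 - V) * ((1 - a * V ^ 2) * P8 * V / P6)
      = -(-V * (1 - a * V) * (1 - V) ^ 2 * (b - a * V) * P8 / ((1 - V) * P5)) := by
  have hP6 : P6 = P5 * (1 - a * V * V) / (1 - a * V) := by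
    rw [eq_div_iff haV]; exact r1
  rw [hP6]
  have hVV2 : 1 - a * V ^ 2 ≠ 0 := by rw [sq, ← mul_assoc]; exact hVV
  field_simp [h5, hV, haV, hVV, hVV2]

noncomputable def genTerm (a b Q : K) (N k : ℕ) : K :=
  (1 - a*Q^(2*k)) * qPoch a Q k^2 * qPoch b Q k * (∏ i ∈ Finset.range k, (Q^N - Q^i)) * Q^k /
  (qPoch Q Q k^2 * (∏ i ∈ Finset.range k, (b - a*Q^(i+1))) * qPoch (a*Q^(N+1)) Q k)

noncomputable def genG (a b Q : K) (N k : ℕ) : K :=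
  -(Q^(N+1)) * (1 - a*Q^(N+1)) * qPoch a Q k^2 * qPoch b Q k * (1 - Q^k)^2 * (b - a*Q^k) *
    (∏ i ∈ Finset.range k, (Q^(N+1) - Q^i)) /
  ((1 - Q^(N+1)) * (qPoch Q Q k^2 * (∏ i ∈ Finset.range k, (b - a*Q^(i+1))) * qPoch (a*Q^(N+1)) Q k))

lemma PqQ_ne (Q : K) (hQ1 : ∀ i : ℕ, (1:K) - Q^(i+1) ≠ 0) (k : ℕ) : qPoch Q Q k ≠ 0 := by
  rw [qPoch]
  refine Finset.prod_ne_zero_iff.2 fun i _ => ?_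
  have : (1:K) - Q * Q^i = 1 - Q^(i+1) := by ring
  rw [this]; exact hQ1 i

lemma pab_ne (a b Q : K) (hab : ∀ i : ℕ, b - a*Q^(i+1) ≠ 0) (k : ℕ) : (∏ i ∈ Finset.range k, (b - a*Q^(i+1))) ≠ 0 :=
  Finset.prod_ne_zero_iff.2 fun i _ => hab i

lemma paw_ne (a Q : K) (haQ : ∀ i : ℕ, (1:K) - a*Q^(i+1) ≠ 0) (N k : ℕ) : qPoch (a*Q^(N+1)) Q k ≠ 0 := by
  rw [qPoch]
  refine Finset.prod_ne_zero_iff.2 fun i _ => ?_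
  have : (1:K) - a*Q^(N+1) * Q^i = 1 - a*Q^(N+i+1) := by ring
  rw [this]; exact haQ (N+i)

lemma r1_poch (a Q : K) (N k : ℕ) :
    qPoch (a*Q^(N+1+1)) Q k * (1 - a*Q^(N+1)) = qPoch (a*Q^(N+1)) Q k * (1 - a*Q^(N+1)*Q^k) := by
  have h1 : qPoch (a*Q^(N+1)) Q (k+1) = qPoch (a*Q^(N+1)) Q k * (1 - a*Q^(N+1)*Q^k) := by
    rw [qPoch_succ]
  have h2 : qPoch (a*Q^(N+1)) Q (k+1) = qPoch (a*Q^(N+1+1)) Q k * (1 - a*Q^(N+1)) := by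
    rw [qPoch, Finset.prod_range_succ']
    congr 1
    · exact Finset.prod_congr rfl fun i _ => by ring
    · ring
  rw [← h1, h2]

lemma r2_prod (Q : K) (N k : ℕ) :
    (∏ i ∈ Finset.range k, (Q^(N+1) - Q^i)) * (Q^(N+1) - Q^k)
      = (Q^(N+1) - 1) * Q^k * ∏ i ∈ Finset.range k, (Q^N - Q^i) := by
  rw [← Finset.prod_range_succ (fun i => Q^(N+1) - Q^i) k, Finset.prod_range_succ']
  have h : ∀ i, Q^(N+1) - Q^(i+1) = Q * (Q^N - Q^i) := fun i => by ring
  calc (∏ i ∈ Finset.range k, (Q^(N+1) - Q^(i+1))) * (Q^(N+1) - Q^0)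
      = (∏ i ∈ Finset.range k, (Q * (Q^N - Q^i))) * (Q^(N+1) - 1) := by
        rw [Finset.prod_congr rfl fun i _ => h i]; ring
    _ = (Q^k * ∏ i ∈ Finset.range k, (Q^N - Q^i)) * (Q^(N+1) - 1) := by
        rw [Finset.prod_mul_distrib, Finset.prod_const, Finset.card_range]
    _ = (Q^(N+1) - 1) * Q^k * ∏ i ∈ Finset.range k, (Q^N - Q^i) := by ring

theorem sixPhiFive (a b Q : K) (hQ0 : Q ≠ 0)
    (hQ1 : ∀ i : ℕ, (1:K) - Q^(i+1) ≠ 0)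
    (hab : ∀ i : ℕ, b - a*Q^(i+1) ≠ 0)
    (haQ : ∀ i : ℕ, (1:K) - a*Q^(i+1) ≠ 0) (N : ℕ) :
    ∑ k ∈ Finset.range (N+1), genTerm a b Q N k
      = qPoch a Q (N+1) * (∏ i ∈ Finset.range N, (b - Q^(i+1))) /
        ((∏ i ∈ Finset.range N, (b - a*Q^(i+1))) * qPoch Q Q N) := by
  induction N with
  | zero => simp [genTerm, qPoch]
  | succ N IH =>
    -- abbreviations
    have hV : (1:K) - Q^(N+1) ≠ 0 := hQ1 N
    have haV : (1:K) - a*Q^(N+1) ≠ 0 := haQ N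
    have hV1 : Q^(N+1) - (1:K) ≠ 0 := fun h => hV (by linear_combination -h)
    have hA : (b - a*Q^(N+1)) * (1 - Q^(N+1)) ≠ 0 := mul_ne_zero (hab N) hV
    -- pointwise step for k ≤ N
    have SA : ∀ k, k ≤ N →
        (b - a*Q^(N+1)) * (1 - Q^(N+1)) * genTerm a b Q (N+1) k
          - (1 - a*Q^(N+1)) * (b - Q^(N+1)) * genTerm a b Q N k
        = genG a b Q N (k+1) - genG a b Q N k := by
      intro k hk
      have hu0 : (Q:K)^k ≠ 0 := pow_ne_zero _ hQ0
      have hVu : (1:K) - a*Q^(N+1)*Q^k ≠ 0 := by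
        have : (1:K) - a*Q^(N+1)*Q^k = 1 - a*Q^(N+k+1) := by ring
        rw [this]; exact haQ (N+k)
      have hQu : (1:K) - Q*Q^k ≠ 0 := by
        have : (1:K) - Q*Q^k = 1 - Q^(k+1) := by ring
        rw [this]; exact hQ1 k
      have hbQu : b - a*(Q*Q^k) ≠ 0 := by
        have : b - a*(Q*Q^k) = b - a*Q^(k+1) := by ring
        rw [this]; exact hab k
      have h3 := PqQ_ne Q hQ1 k
      have h4 := pab_ne a b Q hab k
      have h5 := paw_ne a Q haQ N k
      have h6 := paw_ne a Q haQ (N+1) k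
      have r1 := r1_poch a Q N k
      have r2 := r2_prod Q N k
      have hden : qPoch Q Q k^2 * (∏ i ∈ Finset.range k, (b - a*Q^(i+1))) ≠ 0 :=
        mul_ne_zero (pow_ne_zero _ h3) h4
      -- conversion equalities
      have e1 : genTerm a b Q (N+1) k
          = (qPoch a Q k^2 * qPoch b Q k / (qPoch Q Q k^2 * (∏ i ∈ Finset.range k, (b - a*Q^(i+1)))))
            * ((1 - a*(Q^k)^2) * (∏ i ∈ Finset.range k, (Q^(N+1) - Q^i)) * Q^k
                / qPoch (a*Q^(N+1+1)) Q k) := by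
        rw [genTerm, div_mul_div_comm]; ring
      have e2 : genTerm a b Q N k
          = (qPoch a Q k^2 * qPoch b Q k / (qPoch Q Q k^2 * (∏ i ∈ Finset.range k, (b - a*Q^(i+1)))))
            * ((1 - a*(Q^k)^2) * (∏ i ∈ Finset.range k, (Q^N - Q^i)) * Q^k
                / qPoch (a*Q^(N+1)) Q k) := by
        rw [genTerm, div_mul_div_comm]; ring
      have e4 : genG a b Q N k
          = (qPoch a Q k^2 * qPoch b Q k / (qPoch Q Q k^2 * (∏ i ∈ Finset.range k, (b - a*Q^(i+1)))))
            * (-(Q^(N+1)) * (1 - a*Q^(N+1)) * (1 - Q^k)^2 * (b - a*Q^k) *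
                (∏ i ∈ Finset.range k, (Q^(N+1) - Q^i))
                / ((1 - Q^(N+1)) * qPoch (a*Q^(N+1)) Q k)) := by
        rw [genG, div_mul_div_comm]; ring
      have e3 : genG a b Q N (k+1)
          = (qPoch a Q k^2 * qPoch b Q k / (qPoch Q Q k^2 * (∏ i ∈ Finset.range k, (b - a*Q^(i+1)))))
            * (-(Q^(N+1)) * (1 - a*Q^(N+1)) * (1 - a*Q^k)^2 * (1 - b*Q^k) * (Q^(N+1) - Q^k) *
                (∏ i ∈ Finset.range k, (Q^(N+1) - Q^i))
                / ((1 - Q^(N+1)) * (1 - a*Q^(N+1)*Q^k) * qPoch (a*Q^(N+1)) Q k)) := by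
        rw [genG, div_mul_div_comm, div_eq_div_iff]
        · rw [qPoch_succ a Q k, qPoch_succ b Q k, qPoch_succ Q Q k, qPoch_succ (a*Q^(N+1)) Q k,
            Finset.prod_range_succ (fun i => b - a*Q^(i+1)) k,
            Finset.prod_range_succ (fun i => Q^(N+1) - Q^i) k]
          ring
        · exact mul_ne_zero hV (mul_ne_zero (mul_ne_zero (pow_ne_zero _ (PqQ_ne Q hQ1 (k+1)))
            (pab_ne a b Q hab (k+1))) (paw_ne a Q haQ N (k+1)))
        · exact mul_ne_zero hden (mul_ne_zero (mul_ne_zero hV hVu) h5)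
      rw [e1, e2, e3, e4]
      linear_combination (qPoch a Q k^2 * qPoch b Q k / (qPoch Q Q k^2 * (∏ i ∈ Finset.range k, (b - a*Q^(i+1)))))
        * key1r a b (Q^k) (Q^(N+1)) (qPoch (a*Q^(N+1)) Q k) (qPoch (a*Q^(N+1+1)) Q k)
            (∏ i ∈ Finset.range k, (Q^N - Q^i)) (∏ i ∈ Finset.range k, (Q^(N+1) - Q^i))
            h5 h6 hV haV hVu hu0 hV1 r1 r2
    -- last term
    have lastT : (b - a*Q^(N+1)) * (1 - Q^(N+1)) * genTerm a b Q (N+1) (N+1)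
        = - genG a b Q N (N+1) := by
      have h3 := PqQ_ne Q hQ1 (N+1)
      have h4 := pab_ne a b Q hab (N+1)
      have h5 := paw_ne a Q haQ N (N+1)
      have h6 := paw_ne a Q haQ (N+1) (N+1)
      have hVV : (1:K) - a*Q^(N+1)*Q^(N+1) ≠ 0 := by
        have : (1:K) - a*Q^(N+1)*Q^(N+1) = 1 - a*Q^(2*N+1+1) := by ring
        rw [this]; exact haQ (2*N+1)
      have r1 : qPoch (a*Q^(N+1+1)) Q (N+1) * (1 - a*Q^(N+1))
          = qPoch (a*Q^(N+1)) Q (N+1) * (1 - a*Q^(N+1)*Q^(N+1)) := r1_poch a Q N (N+1)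
      have e1 : genTerm a b Q (N+1) (N+1)
          = (qPoch a Q (N+1)^2 * qPoch b Q (N+1) / (qPoch Q Q (N+1)^2 * (∏ i ∈ Finset.range (N+1), (b - a*Q^(i+1)))))
            * ((1 - a*(Q^(N+1))^2) * (∏ i ∈ Finset.range (N+1), (Q^(N+1) - Q^i)) * Q^(N+1)
                / qPoch (a*Q^(N+1+1)) Q (N+1)) := by
        rw [genTerm, div_mul_div_comm]; ring
      have e2 : genG a b Q N (N+1)
          = (qPoch a Q (N+1)^2 * qPoch b Q (N+1) / (qPoch Q Q (N+1)^2 * (∏ i ∈ Finset.range (N+1), (b - a*Q^(i+1)))))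
            * (-(Q^(N+1)) * (1 - a*Q^(N+1)) * (1 - Q^(N+1))^2 * (b - a*Q^(N+1)) *
                (∏ i ∈ Finset.range (N+1), (Q^(N+1) - Q^i))
                / ((1 - Q^(N+1)) * qPoch (a*Q^(N+1)) Q (N+1))) := by
        rw [genG, div_mul_div_comm]; ring
      rw [e1, e2]
      linear_combination (qPoch a Q (N+1)^2 * qPoch b Q (N+1) / (qPoch Q Q (N+1)^2 * (∏ i ∈ Finset.range (N+1), (b - a*Q^(i+1)))))
        * key2r a b (Q^(N+1)) (qPoch (a*Q^(N+1)) Q (N+1)) (qPoch (a*Q^(N+1+1)) Q (N+1))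
            (∏ i ∈ Finset.range (N+1), (Q^(N+1) - Q^i)) h5 h6 hV haV hVV r1
    -- boundary
    have hG0 : genG a b Q N 0 = 0 := by
      simp [genG, qPoch]
    -- assemble
    have main : (b - a*Q^(N+1)) * (1 - Q^(N+1)) * (∑ k ∈ Finset.range (N+1+1), genTerm a b Q (N+1) k)
        = (1 - a*Q^(N+1)) * (b - Q^(N+1)) * (∑ k ∈ Finset.range (N+1), genTerm a b Q N k) := by
      rw [Finset.sum_range_succ, mul_add, lastT]
      rw [Finset.mul_sum, Finset.mul_sum]
      have : ∀ k ∈ Finset.range (N+1),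
          (b - a*Q^(N+1)) * (1 - Q^(N+1)) * genTerm a b Q (N+1) k
            = (1 - a*Q^(N+1)) * (b - Q^(N+1)) * genTerm a b Q N k
              + (genG a b Q N (k+1) - genG a b Q N k) := by
        intro k hk
        have hk' : k ≤ N := by have := Finset.mem_range.1 hk; omega
        have h := SA k hk'
        linear_combination h
      rw [Finset.sum_congr rfl this, Finset.sum_add_distrib, Finset.sum_range_sub (genG a b Q N), hG0]
      ring
    -- conclude
    apply mul_left_cancel₀ hA
    rw [main, IH, ← mul_div_assoc, ← mul_div_assoc,
      div_eq_div_iff (mul_ne_zero (pab_ne a b Q hab N) (PqQ_ne Q hQ1 N))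
        (mul_ne_zero (pab_ne a b Q hab (N+1)) (PqQ_ne Q hQ1 (N+1)))]
    rw [qPoch_succ a Q (N+1), qPoch_succ Q Q N,
      Finset.prod_range_succ (fun i => b - Q^(i+1)) N,
      Finset.prod_range_succ (fun i => b - a*Q^(i+1)) N]
    ring
end

section RatFuncFacts

lemma X_pow_ne_one (k : ℕ) (hk : k ≠ 0) : (RatFunc.X : RatFunc ℚ)^k ≠ 1 := by
  intro h
  have h2 : (algebraMap (Polynomial ℚ) (RatFunc ℚ)) (Polynomial.X ^ k)
      = algebraMap (Polynomial ℚ) (RatFunc ℚ) 1 := by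
    rw [map_pow, map_one, RatFunc.algebraMap_X, h]
  have h3 : (Polynomial.X : Polynomial ℚ)^k = 1 := RatFunc.algebraMap_injective ℚ h2
  have h4 := congrArg Polynomial.natDegree h3
  rw [Polynomial.natDegree_X_pow, Polynomial.natDegree_one] at h4
  exact hk h4

lemma X_zpow_ne_one (m : ℤ) (hm : m ≠ 0) : (RatFunc.X : RatFunc ℚ)^m ≠ 1 := by
  intro h
  rcases lt_or_gt_of_ne hm with hneg | hpos
  · have h2 : (RatFunc.X : RatFunc ℚ)^(-m) = 1 := by
      rw [zpow_neg, h, inv_one]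
    have h3 : (RatFunc.X : RatFunc ℚ)^((-m).toNat) = 1 := by
      rw [← h2, ← zpow_natCast, Int.toNat_of_nonneg (by omega)]
    exact X_pow_ne_one _ (by omega) h3
  · have h3 : (RatFunc.X : RatFunc ℚ)^(m.toNat) = 1 := by
      rw [← h, ← zpow_natCast, Int.toNat_of_nonneg (by omega)]
    exact X_pow_ne_one _ (by omega) h3

lemma one_sub_X_zpow_ne (m : ℤ) (hm : m ≠ 0) : (1:RatFunc ℚ) - RatFunc.X^m ≠ 0 :=
  sub_ne_zero.2 (Ne.symm (X_zpow_ne_one m hm))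

lemma zpow_sub_zpow_ne (α β : ℤ) (h : α ≠ β) :
    (RatFunc.X : RatFunc ℚ)^α - RatFunc.X^β ≠ 0 := by
  have hq0 : (RatFunc.X : RatFunc ℚ) ≠ 0 := RatFunc.X_ne_zero
  have h1 : (RatFunc.X : RatFunc ℚ)^α - RatFunc.X^β
      = -(RatFunc.X^β * (1 - RatFunc.X^(α-β))) := by
    rw [mul_sub, mul_one, ← zpow_add₀ hq0]
    have : β + (α - β) = α := by ring
    rw [this]; ring
  rw [h1]
  exact neg_ne_zero.2 (mul_ne_zero (zpow_ne_zero _ hq0)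
    (one_sub_X_zpow_ne _ (sub_ne_zero.2 h)))

lemma conv_alg {K : Type*} [Field K] (A P1 P2 P3 Pq Pe Pf X1 X2 X3 X4 w : K)
    (hPq : Pq ≠ 0) (hPe : Pe ≠ 0) (hPf : Pf ≠ 0) (hX4 : X4 ≠ 0) (hX2 : X2 ≠ 0) (hw : w ≠ 0)
    (hrel : X1 * X2 = X3 * X4) :
    A / w * (P1^2 * P2 * P3) / (Pq^2 * Pe * Pf) * X3
      = A * P1^2 * P2 * (X1 * P3) * X2 / (Pq^2 * (X4 * Pf) * Pe) / w := by
  have hX3 : X3 = X1*X2/X4 := by rw [eq_div_iff hX4, ← hrel]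
  rw [hX3]
  field_simp

lemma final_alg {K : Type*} [Field K] (PtN C Pneg2 Y P2t PqN w : K)
    (h1 : Pneg2 ≠ 0) (h2 : Y ≠ 0) (h3 : PqN ≠ 0) (h4 : w ≠ 0) (h5 : PtN ≠ 0) :
    (PtN * C) * ((Pneg2 / Y) * P2t) / ((Pneg2 * PtN) * PqN) / w
      = P2t / PqN * (C / w) * Y⁻¹ := by
  conv_lhs => rw [div_mul_eq_mul_div, ← mul_div_assoc, div_div, div_div]
  conv_rhs => rw [div_mul_div_comm, ← div_eq_mul_inv, div_div]
  rw [div_eq_div_iff (mul_ne_zero h2 (mul_ne_zero (mul_ne_zero (mul_ne_zero h1 h5) h3) h4))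
    (mul_ne_zero (mul_ne_zero h3 h4) h2)]
  ring

lemma zpow_congr (q : RatFunc ℚ) {α β : ℤ} (h : α = β) : q^α = q^β := congrArg _ h

end RatFuncFacts
/-- The terminating Rogers `₆φ₅` evaluation used in the proof of Theorem 5. -/
theorem stmt12 (n : ℕ) (hn : 1 < n) (d : ℕ) (hd : 2 ≤ d) (t : ℤ)
    (htd : Int.gcd t (d : ℤ) = 1) (hmod : (n : ℤ) ≡ t [ZMOD (d : ℤ)])
    (ht1 : (n : ℤ) + d - n * d ≤ t) (ht2 : t ≤ (n : ℤ)) :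
    let q : RatFunc ℚ := RatFunc.X
    let N : ℕ := (((n : ℤ) - t) / (d : ℤ)).toNat
    (∑ k ∈ Finset.range (N + 1),
        qInt q (2 * (d : ℤ) * k + t) *
          (qPoch (q ^ t) (q ^ (d : ℤ)) k ^ 2 * qPoch (q ^ (t + (n : ℤ))) (q ^ (d : ℤ)) k *
            qPoch (q ^ (t - (n : ℤ))) (q ^ (d : ℤ)) k) /
          (qPoch (q ^ (d : ℤ)) (q ^ (d : ℤ)) k ^ 2 *
            qPoch (q ^ ((d : ℤ) + n)) (q ^ (d : ℤ)) k *
            qPoch (q ^ ((d : ℤ) - n)) (q ^ (d : ℤ)) k) * q ^ (((d : ℤ) - 2 * t) * k)) =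
      qPoch (q ^ (2 * t)) (q ^ (d : ℤ)) N / qPoch (q ^ (d : ℤ)) (q ^ (d : ℤ)) N *
        qInt q (n : ℤ) * q ^ (t * (t - (n : ℤ)) / (d : ℤ)) := by
  intro q N
  have hq0 : q ≠ 0 := RatFunc.X_ne_zero
  have hmul : ∀ α β : ℤ, q^α * q^β = q^(α+β) := fun α β => (zpow_add₀ hq0 α β).symm
  have hd0 : (d:ℤ) ≠ 0 := Int.natCast_ne_zero.2 (by omega)
  have hdvd : (d:ℤ) ∣ (n:ℤ) - t := hmod.symm.dvd
  have hN : (N:ℤ) = ((n:ℤ)-t)/(d:ℤ) :=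
    Int.toNat_of_nonneg (Int.ediv_nonneg (by linarith) (by positivity))
  have hNval : (n:ℤ) - t = (d:ℤ) * N := by
    rw [hN, Int.mul_ediv_cancel' hdvd]
  have hndvd_t : ¬ (d:ℤ) ∣ t := by
    intro hdt
    have h1 : (d:ℤ) ∣ (Int.gcd t d : ℤ) := Int.dvd_coe_gcd hdt dvd_rfl
    rw [htd] at h1
    have := Int.le_of_dvd one_pos h1
    omega
  have hndvd_n : ¬ (d:ℤ) ∣ (n:ℤ) := by
    intro hdn
    exact hndvd_t (by simpa using hdn.sub hdvd)
  -- RatFunc facts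
  have h1q : (1:RatFunc ℚ) - q ≠ 0 := by
    have := one_sub_X_zpow_ne 1 one_ne_zero
    rwa [zpow_one] at this
  have hQ0 : (q^(d:ℤ)) ≠ 0 := zpow_ne_zero _ hq0
  have hQpow : ∀ m : ℕ, (q^(d:ℤ))^m = q^((d:ℤ)*m) := fun m => by
    rw [← zpow_natCast (q^(d:ℤ)) m, ← zpow_mul]
  have hQN : (q^(d:ℤ))^N = q^((n:ℤ)-t) := by
    rw [hQpow N]
    exact congrArg (fun z : ℤ => q^z) hNval.symm
  have hQ1 : ∀ i : ℕ, (1:RatFunc ℚ) - (q^(d:ℤ))^(i+1) ≠ 0 := by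
    intro i
    rw [hQpow (i+1)]
    refine one_sub_X_zpow_ne _ (mul_ne_zero hd0 ?_)
    exact_mod_cast Nat.succ_ne_zero i
  have hab : ∀ i : ℕ, q^(t+(n:ℤ)) - q^t*(q^(d:ℤ))^(i+1) ≠ 0 := by
    intro i
    rw [hQpow (i+1), hmul]
    refine zpow_sub_zpow_ne _ _ fun h => hndvd_n ?_
    exact ⟨(i:ℤ)+1, by push_cast at h ⊢; linarith⟩
  have haQ : ∀ i : ℕ, (1:RatFunc ℚ) - q^t*(q^(d:ℤ))^(i+1) ≠ 0 := by
    intro i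
    rw [hQpow (i+1), hmul]
    refine one_sub_X_zpow_ne _ fun h => hndvd_t ?_
    exact ⟨-((i:ℤ)+1), by push_cast at h ⊢; linarith⟩
  have gen := sixPhiFive (q^t) (q^(t+(n:ℤ))) (q^(d:ℤ)) hQ0 hQ1 hab haQ N
  -- per-summand conversion
  have conv : ∀ k ∈ Finset.range (N+1),
      qInt q (2 * (d : ℤ) * k + t) *
          (qPoch (q ^ t) (q ^ (d : ℤ)) k ^ 2 * qPoch (q ^ (t + (n : ℤ))) (q ^ (d : ℤ)) k *
            qPoch (q ^ (t - (n : ℤ))) (q ^ (d : ℤ)) k) /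
          (qPoch (q ^ (d : ℤ)) (q ^ (d : ℤ)) k ^ 2 *
            qPoch (q ^ ((d : ℤ) + n)) (q ^ (d : ℤ)) k *
            qPoch (q ^ ((d : ℤ) - n)) (q ^ (d : ℤ)) k) * q ^ (((d : ℤ) - 2 * t) * k)
        = genTerm (q^t) (q^(t+(n:ℤ))) (q^(d:ℤ)) N k / (1-q) := by
    intro k hk
    have cA : (1:RatFunc ℚ) - q^t*(q^(d:ℤ))^(2*k) = 1 - q^(2*(d:ℤ)*k + t) := by
      rw [hQpow (2*k), hmul,
        zpow_congr q (show t + (d:ℤ)*((2*k:ℕ):ℤ) = 2*(d:ℤ)*k + t by push_cast; ring)]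
    have cB : (∏ i ∈ Finset.range k, ((q^(d:ℤ))^N - (q^(d:ℤ))^i))
        = (q^((n:ℤ)-t))^k * qPoch (q^(t-(n:ℤ))) (q^(d:ℤ)) k := by
      have e : ∀ i ∈ Finset.range k, (q^(d:ℤ))^N - (q^(d:ℤ))^i
          = q^((n:ℤ)-t) * (1 - q^(t-(n:ℤ)) * (q^(d:ℤ))^i) := by
        intro i _
        rw [hQpow i, hQN]
        have k1 : q^((n:ℤ)-t) * (q^(t-(n:ℤ)) * q^((d:ℤ)*(i:ℕ))) = q^((d:ℤ)*(i:ℕ)) := by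
          rw [hmul, hmul]; exact zpow_congr q (by ring)
        linear_combination k1
      rw [Finset.prod_congr rfl e, Finset.prod_mul_distrib, Finset.prod_const,
        Finset.card_range, qPoch]
    have cC : qPoch (q^t*(q^(d:ℤ))^(N+1)) (q^(d:ℤ)) k
        = qPoch (q^((d:ℤ)+n)) (q^(d:ℤ)) k := by
      congr 1
      rw [hQpow (N+1), hmul,
        zpow_congr q (show t + (d:ℤ)*((N+1:ℕ):ℤ) = (d:ℤ)+n by push_cast; linarith)]
    have cD : (∏ i ∈ Finset.range k, (q^(t+(n:ℤ)) - q^t*(q^(d:ℤ))^(i+1)))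
        = (q^(t+(n:ℤ)))^k * qPoch (q^((d:ℤ)-n)) (q^(d:ℤ)) k := by
      have e : ∀ i ∈ Finset.range k, q^(t+(n:ℤ)) - q^t*(q^(d:ℤ))^(i+1)
          = q^(t+(n:ℤ)) * (1 - q^((d:ℤ)-n) * (q^(d:ℤ))^i) := by
        intro i _
        rw [hQpow i, hQpow (i+1)]
        have k1 : q^(t+(n:ℤ)) * (q^((d:ℤ)-n) * q^((d:ℤ)*(i:ℕ))) = q^t * q^((d:ℤ)*((i+1:ℕ):ℤ)) := by
          rw [hmul, hmul, hmul]; exact zpow_congr q (by push_cast; ring)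
        linear_combination k1
      rw [Finset.prod_congr rfl e, Finset.prod_mul_distrib, Finset.prod_const,
        Finset.card_range, qPoch]
    have cpow : (q^((n:ℤ)-t))^k * (q^(d:ℤ))^k
        = q^(((d:ℤ)-2*t)*(k:ℤ)) * (q^(t+(n:ℤ)))^k := by
      have h1 : q^(((d:ℤ)-2*t)*(k:ℤ)) = (q^((d:ℤ)-2*t))^k := by
        rw [zpow_mul, zpow_natCast]
      rw [h1, ← mul_pow, ← mul_pow, hmul, hmul,
        zpow_congr q (show (n:ℤ)-t+(d:ℤ) = (d:ℤ)-2*t+(t+(n:ℤ)) by ring)]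
    have hX2 : (q^(d:ℤ))^k ≠ 0 := pow_ne_zero _ hQ0
    have hX1 : (q^((n:ℤ)-t))^k
        = q^(((d:ℤ)-2*t)*(k:ℤ)) * (q^(t+(n:ℤ)))^k / (q^(d:ℤ))^k := by
      rw [eq_div_iff hX2]; exact cpow
    have hPq : qPoch (q^(d:ℤ)) (q^(d:ℤ)) k ≠ 0 := PqQ_ne _ hQ1 k
    have hPe : qPoch (q^((d:ℤ)+n)) (q^(d:ℤ)) k ≠ 0 := by
      rw [← cC]; exact paw_ne _ _ haQ N k
    have hPf : qPoch (q^((d:ℤ)-n)) (q^(d:ℤ)) k ≠ 0 := by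
      rw [qPoch]
      refine Finset.prod_ne_zero_iff.2 fun i _ => ?_
      rw [hQpow i, hmul]
      refine one_sub_X_zpow_ne _ fun h => hndvd_n ?_
      exact ⟨(i:ℤ)+1, by push_cast at h ⊢; linarith⟩
    have hX4 : (q^(t+(n:ℤ)))^k ≠ 0 := pow_ne_zero _ (zpow_ne_zero _ hq0)
    rw [genTerm, cA, cB, cC, cD, qInt]
    exact conv_alg _ _ _ _ _ _ _ _ _ _ _ _ hPq hPe hPf hX4 hX2 h1q cpow
  rw [Finset.sum_congr rfl conv, ← Finset.sum_div, gen]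
  -- final RHS conversion
  have hPqN : qPoch (q^(d:ℤ)) (q^(d:ℤ)) N ≠ 0 := PqQ_ne _ hQ1 N
  have hPtN : qPoch (q^t) (q^(d:ℤ)) N ≠ 0 := by
    rw [qPoch]
    refine Finset.prod_ne_zero_iff.2 fun i _ => ?_
    rw [hQpow i, hmul]
    refine one_sub_X_zpow_ne _ fun h => hndvd_t ?_
    exact Dvd.intro (-(i:ℕ)) (by push_cast; linarith)
  have fE : q ^ (t*(t-(n:ℤ))/(d:ℤ)) = ((q^t)^N)⁻¹ := by
    have h1 : t*(t-(n:ℤ)) = (-(t*(N:ℤ)))*(d:ℤ) := by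
      have : t - (n:ℤ) = -((d:ℤ)*N) := by linarith
      rw [this]; ring
    have h2 : t*(t-(n:ℤ))/(d:ℤ) = -(t*(N:ℤ)) := by
      rw [h1, Int.mul_ediv_cancel _ hd0]
    have h3 : ((q^t)^N : RatFunc ℚ) = q^(t*(N:ℤ)) := by
      rw [← zpow_natCast (q^t) N, ← zpow_mul]
    rw [h2, h3, ← zpow_neg]
  have fB : (∏ i ∈ Finset.range N, (q^(t+(n:ℤ)) - (q^(d:ℤ))^(i+1)))
      = (∏ i ∈ Finset.range N, -(q^((n:ℤ)-t-(d:ℤ)*i))) * qPoch (q^(2*t)) (q^(d:ℤ)) N := by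
    rw [← Finset.prod_range_reflect (fun i => q^(t+(n:ℤ)) - (q^(d:ℤ))^(i+1)) N]
    have e : ∀ i ∈ Finset.range N, q^(t+(n:ℤ)) - (q^(d:ℤ))^(N-1-i+1)
        = -(q^((n:ℤ)-t-(d:ℤ)*i)) * (1 - q^(2*t) * (q^(d:ℤ))^i) := by
      intro i hi
      have hiN : i < N := Finset.mem_range.1 hi
      rw [hQpow i, hQpow (N-1-i+1),
        show ((N-1-i+1 : ℕ) : ℤ) = (N:ℤ) - i by omega,
        show (d:ℤ)*((N:ℤ)-i) = (n:ℤ)-t-(d:ℤ)*i by linear_combination -hNval]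
      have k1 : q^((n:ℤ)-t-(d:ℤ)*i) * (q^(2*t) * q^((d:ℤ)*(i:ℕ))) = q^(t+(n:ℤ)) := by
        rw [hmul, hmul]; exact zpow_congr q (by ring)
      linear_combination -k1
    rw [Finset.prod_congr rfl e, Finset.prod_mul_distrib, qPoch]
  have fD : (∏ i ∈ Finset.range N, (q^(t+(n:ℤ)) - q^t*(q^(d:ℤ))^(i+1)))
      = (∏ i ∈ Finset.range N, -(q^((n:ℤ)-(d:ℤ)*i))) * qPoch (q^t) (q^(d:ℤ)) N := by
    rw [← Finset.prod_range_reflect (fun i => q^(t+(n:ℤ)) - q^t*(q^(d:ℤ))^(i+1)) N]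
    have e : ∀ i ∈ Finset.range N, q^(t+(n:ℤ)) - q^t*(q^(d:ℤ))^(N-1-i+1)
        = -(q^((n:ℤ)-(d:ℤ)*i)) * (1 - q^t * (q^(d:ℤ))^i) := by
      intro i hi
      have hiN : i < N := Finset.mem_range.1 hi
      rw [hQpow i, hQpow (N-1-i+1), hmul,
        show ((N-1-i+1 : ℕ) : ℤ) = (N:ℤ) - i by omega,
        show t + (d:ℤ)*((N:ℤ)-i) = (n:ℤ)-(d:ℤ)*i by linear_combination -hNval]
      have k1 : q^((n:ℤ)-(d:ℤ)*i) * (q^t * q^((d:ℤ)*(i:ℕ))) = q^(t+(n:ℤ)) := by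
        rw [hmul, hmul]; exact zpow_congr q (by ring)
      linear_combination -k1
    rw [Finset.prod_congr rfl e, Finset.prod_mul_distrib, qPoch]
  have fprod : (∏ i ∈ Finset.range N, -(q^((n:ℤ)-t-(d:ℤ)*i)))
      = (∏ i ∈ Finset.range N, -(q^((n:ℤ)-(d:ℤ)*i))) / (q^t)^N := by
    rw [eq_div_iff (pow_ne_zero _ (zpow_ne_zero _ hq0))]
    rw [show ((q^t)^N : RatFunc ℚ) = ∏ _i ∈ Finset.range N, q^t by
      rw [Finset.prod_const, Finset.card_range], ← Finset.prod_mul_distrib]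
    refine Finset.prod_congr rfl fun i _ => ?_
    rw [neg_mul, hmul, zpow_congr q (show (n:ℤ)-t-(d:ℤ)*i + t = (n:ℤ)-(d:ℤ)*i by ring)]
  have fa : qPoch (q^t) (q^(d:ℤ)) (N+1) = qPoch (q^t) (q^(d:ℤ)) N * (1 - q^(n:ℤ)) := by
    rw [qPoch_succ, hQN, hmul, zpow_congr q (show t + ((n:ℤ)-t) = (n:ℤ) by ring)]
  have hprodneg : (∏ i ∈ Finset.range N, -(q^((n:ℤ)-(d:ℤ)*i))) ≠ 0 :=
    Finset.prod_ne_zero_iff.2 fun i _ => neg_ne_zero.2 (zpow_ne_zero _ hq0)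
  have hqtN : (q^t)^N ≠ 0 := pow_ne_zero _ (zpow_ne_zero _ hq0)
  rw [fB, fD, fa, fprod, fE, qInt]
  exact final_alg _ _ _ _ _ _ _ hprodneg hqtN hPqN h1q hPtN
end

section
/- Let d ≥ 2, m > 1, s, t be integers with gcd(d,t) = 1, 0 ≤ s ≤ m−1 and d·s ≡ −t (mod m). Then (a q^t; q^d)_s / (q^d/a; q^d)_s ≡ (−a)^s · q^{s(2t + ds − d)/2} modulo Φ_m(q), as rational functions in a and q. -/
open Polynomial Finset

section Aux


lemma isCoprime_of_no_common_root {F : Type*} [Field F] (p q : F[X]) (hp : p ≠ 0)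
    (h : ∀ x : AlgebraicClosure F, aeval x p = 0 → aeval x q ≠ 0) : IsCoprime p q := by
  classical
  by_contra hc
  rw [← EuclideanDomain.gcd_isUnit_iff] at hc
  set g := EuclideanDomain.gcd p q with hg
  have hg0 : g ≠ 0 := by
    intro h0
    exact hp ((EuclideanDomain.gcd_eq_zero_iff.mp h0).1)
  have hdeg : g.degree ≠ 0 := fun hdeg => hc (Polynomial.isUnit_iff_degree_eq_zero.mpr hdeg)
  have hdeg' : (g.map (algebraMap F (AlgebraicClosure F))).degree ≠ 0 := by
    rwa [Polynomial.degree_map]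
  obtain ⟨x, hx⟩ := IsAlgClosed.exists_root _ hdeg'
  have hxg : aeval x g = 0 := by
    rwa [Polynomial.IsRoot, Polynomial.eval_map, ← Polynomial.aeval_def] at hx
  have hroot : ∀ r : F[X], g ∣ r → aeval x r = 0 := by
    rintro r ⟨u, rfl⟩
    rw [map_mul, hxg, zero_mul]
  exact h x (hroot p (EuclideanDomain.gcd_dvd_left p q))
    (hroot q (EuclideanDomain.gcd_dvd_right p q))

lemma pow_eq_one_of_root_cyclotomic {F : Type*} [Field F] {m : ℕ} (hm : 0 < m)
    {x : AlgebraicClosure F} (hx : aeval x (cyclotomic m F) = 0) : x ^ m = 1 := by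
  have hdvd := Polynomial.cyclotomic.dvd_X_pow_sub_one m F
  obtain ⟨u, hu⟩ := hdvd
  have : aeval x ((X : F[X]) ^ m - 1) = 0 := by rw [hu, map_mul, hx, zero_mul]
  simpa [sub_eq_zero] using this

lemma ratFuncX_pow_ne_one (m : ℕ) (hm : 0 < m) : (RatFunc.X : RatFunc ℚ) ^ m ≠ 1 := by
  intro h
  rw [← RatFunc.algebraMap_X (K := ℚ), ← map_pow, ← map_one (algebraMap ℚ[X] (RatFunc ℚ))] at h
  have := RatFunc.algebraMap_injective ℚ h
  have h0 := congrArg (Polynomial.eval (0 : ℚ)) this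
  simp [zero_pow hm.ne'] at h0

lemma coprime_cyclo_X {m : ℕ} (hm : 1 < m) :
    IsCoprime (cyclotomic m (RatFunc ℚ)) (X : (RatFunc ℚ)[X]) := by
  refine isCoprime_of_no_common_root _ _ (cyclotomic_ne_zero m _) (fun x hx hx2 => ?_)
  have h1 := pow_eq_one_of_root_cyclotomic (by omega : 0 < m) hx
  rw [Polynomial.aeval_X] at hx2
  rw [hx2, zero_pow (by omega : m ≠ 0)] at h1
  exact zero_ne_one h1

lemma coprime_cyclo_factor {m k : ℕ} (hm : 1 < m) (hk : 1 ≤ k) :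
    IsCoprime (cyclotomic m (RatFunc ℚ))
      (1 - C ((RatFunc.X : RatFunc ℚ)⁻¹) * X ^ k) := by
  refine isCoprime_of_no_common_root _ _ (cyclotomic_ne_zero m _) (fun x hx hx2 => ?_)
  have h1 := pow_eq_one_of_root_cyclotomic (by omega : 0 < m) hx
  set φ := algebraMap (RatFunc ℚ) (AlgebraicClosure (RatFunc ℚ))
  have h2 : φ ((RatFunc.X : RatFunc ℚ)⁻¹) * x ^ k = 1 := by
    have := hx2
    rw [map_sub, map_one, map_mul, Polynomial.aeval_C, map_pow, Polynomial.aeval_X,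
      sub_eq_zero] at this
    exact this.symm
  have h3 : φ ((RatFunc.X : RatFunc ℚ)⁻¹) ^ m * (x ^ m) ^ k = 1 := by
    rw [← pow_mul, mul_comm m k, pow_mul, ← mul_pow, h2, one_pow]
  rw [h1, one_pow, mul_one, ← map_pow, inv_pow] at h3
  have h4 : φ ((RatFunc.X : RatFunc ℚ) ^ m) = 1 := by
    have : φ (((RatFunc.X : RatFunc ℚ) ^ m)⁻¹) = 1 := h3
    rw [map_inv₀, inv_eq_one] at this
    exact this
  have := (φ.injective) (by rw [h4, map_one] : φ ((RatFunc.X : RatFunc ℚ) ^ m) = φ 1)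
  exact ratFuncX_pow_ne_one m (by omega) this

namespace Stmt16Aux


noncomputable abbrev ι : Polynomial (RatFunc ℚ) →+* RatFunc (RatFunc ℚ) :=
  (algebraMap (Polynomial (RatFunc ℚ)) (RatFunc (RatFunc ℚ)))

lemma ι_inj : Function.Injective ι := RatFunc.algebraMap_injective (RatFunc ℚ)

/-- x is "M-integral": writable as p/g with g coprime to M. -/
def Adm (M : Polynomial (RatFunc ℚ)) (x : RatFunc (RatFunc ℚ)) : Prop :=
  ∃ p g : Polynomial (RatFunc ℚ), IsCoprime M g ∧ x * ι g = ι p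

variable {M : Polynomial (RatFunc ℚ)} {x y : RatFunc (RatFunc ℚ)}

lemma adm_map (p : Polynomial (RatFunc ℚ)) : Adm M (ι p) :=
  ⟨p, 1, isCoprime_one_right, by simp⟩

lemma adm_one : Adm M 1 := by simpa using adm_map 1

lemma Adm.mul (hx : Adm M x) (hy : Adm M y) : Adm M (x * y) := by
  obtain ⟨p1, g1, h1, e1⟩ := hx
  obtain ⟨p2, g2, h2, e2⟩ := hy
  exact ⟨p1 * p2, g1 * g2, h1.mul_right h2, by
    rw [map_mul, map_mul]
    calc x * y * (ι g1 * ι g2) = (x * ι g1) * (y * ι g2) := by ring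
    _ = ι p1 * ι p2 := by rw [e1, e2]⟩

lemma Adm.add (hx : Adm M x) (hy : Adm M y) : Adm M (x + y) := by
  obtain ⟨p1, g1, h1, e1⟩ := hx
  obtain ⟨p2, g2, h2, e2⟩ := hy
  exact ⟨p1 * g2 + p2 * g1, g1 * g2, h1.mul_right h2, by
    rw [map_mul, map_add, map_mul, map_mul]
    calc (x + y) * (ι g1 * ι g2) = (x * ι g1) * ι g2 + (y * ι g2) * ι g1 := by ring
    _ = _ := by rw [e1, e2]⟩

lemma Adm.neg (hx : Adm M x) : Adm M (-x) := by
  obtain ⟨p, g, h, e⟩ := hx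
  exact ⟨-p, g, h, by rw [map_neg, neg_mul, e]⟩

lemma Adm.pow (hx : Adm M x) (n : ℕ) : Adm M (x ^ n) := by
  induction n with
  | zero => simpa using (adm_one : Adm M 1)
  | succ n ih => rw [pow_succ]; exact ih.mul hx

lemma adm_inv (g : Polynomial (RatFunc ℚ)) (h : IsCoprime M g) (hg : g ≠ 0) :
    Adm M (ι g)⁻¹ := by
  refine ⟨1, g, h, ?_⟩
  rw [inv_mul_cancel₀ (by exact RatFunc.algebraMap_ne_zero hg), map_one]

lemma adm_prod {ι' : Type*} (s : Finset ι') (f : ι' → RatFunc (RatFunc ℚ))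
    (h : ∀ i ∈ s, Adm M (f i)) : Adm M (∏ i ∈ s, f i) := by
  induction s using Finset.cons_induction with
  | empty => simpa using (adm_one : Adm M 1)
  | cons i s his ih =>
    rw [Finset.prod_cons]
    exact (h i (Finset.mem_cons_self i s)).mul
      (ih fun j hj => h j (Finset.mem_cons_of_mem hj))

lemma rc_zero : ratCongr2 M 0 := ⟨0, 1, isCoprime_one_right, by simp⟩

lemma rc_add (hx : ratCongr2 M x) (hy : ratCongr2 M y) : ratCongr2 M (x + y) := by
  obtain ⟨f1, g1, h1, e1⟩ := hx
  obtain ⟨f2, g2, h2, e2⟩ := hy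
  refine ⟨f1 * g2 + f2 * g1, g1 * g2, h1.mul_right h2, ?_⟩
  rw [map_mul, map_add, map_mul, map_mul]
  calc (x + y) * (ι g1 * ι g2)
      = (x * ι g1) * ι g2 + (y * ι g2) * ι g1 := by ring
    _ = _ := by rw [e1, e2]; ring

lemma rc_neg (hx : ratCongr2 M x) : ratCongr2 M (-x) := by
  obtain ⟨f, g, h, e⟩ := hx
  exact ⟨-f, g, h, by rw [map_neg, neg_mul, e]; ring⟩

lemma rc_mul_adm (hx : ratCongr2 M x) (hy : Adm M y) : ratCongr2 M (x * y) := by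
  obtain ⟨f1, g1, h1, e1⟩ := hx
  obtain ⟨p2, g2, h2, e2⟩ := hy
  refine ⟨f1 * p2, g1 * g2, h1.mul_right h2, ?_⟩
  rw [map_mul, map_mul]
  calc x * y * (ι g1 * ι g2) = (x * ι g1) * (y * ι g2) := by ring
    _ = _ := by rw [e1, e2]; ring

lemma rc_M_mul (hy : Adm M y) : ratCongr2 M (ι M * y) := by
  obtain ⟨p, g, h, e⟩ := hy
  exact ⟨p, g, h, by rw [mul_assoc, e]⟩

/-- congruence mod M -/
def ECong (M : Polynomial (RatFunc ℚ)) (x y : RatFunc (RatFunc ℚ)) : Prop :=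
  ratCongr2 M (x - y)

lemma ECong.refl (x : RatFunc (RatFunc ℚ)) : ECong M x x := by
  unfold ECong; simpa using (rc_zero : ratCongr2 M 0)

lemma ECong.symm (h : ECong M x y) : ECong M y x := by
  unfold ECong at *; simpa using rc_neg h

lemma ECong.trans {z : RatFunc (RatFunc ℚ)} (h1 : ECong M x y) (h2 : ECong M y z) :
    ECong M x z := by
  unfold ECong at *
  have := rc_add h1 h2
  simpa using this

lemma ECong.mul {x' y' : RatFunc (RatFunc ℚ)} (h1 : ECong M x x') (h2 : ECong M y y')
    (hy : Adm M y) (hx' : Adm M x') : ECong M (x * y) (x' * y') := by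
  unfold ECong at *
  have : x * y - x' * y' = (x - x') * y + (y - y') * x' := by ring
  rw [this]
  exact rc_add (rc_mul_adm h1 hy) (rc_mul_adm h2 hx')

lemma Adm.sub {M : Polynomial (RatFunc ℚ)} {x y} (hx : Adm M x) (hy : Adm M y) :
    Adm M (x - y) := by
  rw [sub_eq_add_neg]; exact hx.add hy.neg

lemma adm_q_pow {M : Polynomial (RatFunc ℚ)} (n : ℕ) :
    Adm M ((RatFunc.X : RatFunc (RatFunc ℚ)) ^ n) := by
  have : (RatFunc.X : RatFunc (RatFunc ℚ)) = ι X := (RatFunc.algebraMap_X).symm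
  rw [this]
  exact (adm_map X).pow n

lemma adm_q_zpow {m : ℕ} (hm : 1 < m) (z : ℤ) :
    Adm (cyclotomic m (RatFunc ℚ)) ((RatFunc.X : RatFunc (RatFunc ℚ)) ^ z) := by
  have hX : (RatFunc.X : RatFunc (RatFunc ℚ)) = ι X := (RatFunc.algebraMap_X).symm
  cases z with
  | ofNat n => rw [Int.ofNat_eq_coe, zpow_natCast]; exact adm_q_pow n
  | negSucc n =>
    rw [zpow_negSucc, ← inv_pow]
    refine Adm.pow ?_ (n + 1)
    rw [hX]
    exact adm_inv X (coprime_cyclo_X hm) Polynomial.X_ne_zero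

lemma econg_q_pow_m_one {m : ℕ} (hm : 1 < m) :
    ECong (cyclotomic m (RatFunc ℚ)) ((RatFunc.X : RatFunc (RatFunc ℚ)) ^ m) 1 := by
  obtain ⟨r, hr⟩ := Polynomial.cyclotomic.dvd_X_pow_sub_one m (RatFunc ℚ)
  refine ⟨r, 1, isCoprime_one_right, ?_⟩
  rw [map_one, mul_one]
  have : (RatFunc.X : RatFunc (RatFunc ℚ)) ^ m - 1 = ι ((X : (RatFunc ℚ)[X]) ^ m - 1) := by
    rw [map_sub, map_pow, map_one, RatFunc.algebraMap_X]
  rw [this, hr, map_mul]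

lemma econg_inv_one {M : Polynomial (RatFunc ℚ)} {v : RatFunc (RatFunc ℚ)} (hv : v ≠ 0)
    (h : ECong M v 1) (hvi : Adm M v⁻¹) : ECong M v⁻¹ 1 := by
  have key : v⁻¹ - 1 = (1 - v) * v⁻¹ := by field_simp
  show ratCongr2 M (v⁻¹ - 1)
  rw [key]
  have h' : ratCongr2 M (1 - v) := by
    have := h.symm; exact this
  exact rc_mul_adm h' hvi

lemma econg_pow_one {M : Polynomial (RatFunc ℚ)} {u : RatFunc (RatFunc ℚ)}
    (h : ECong M u 1) (hu : Adm M u) (n : ℕ) : ECong M (u ^ n) 1 := by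
  induction n with
  | zero => simpa using ECong.refl (M := M) 1
  | succ n ih =>
    have := ECong.mul ih h hu adm_one
    simpa [pow_succ] using this

lemma econg_zpow_one {M : Polynomial (RatFunc ℚ)} {u : RatFunc (RatFunc ℚ)} (hu0 : u ≠ 0)
    (h : ECong M u 1) (hu : Adm M u) (hui : Adm M u⁻¹) (k : ℤ) : ECong M (u ^ k) 1 := by
  cases k with
  | ofNat n => rw [Int.ofNat_eq_coe, zpow_natCast]; exact econg_pow_one h hu n
  | negSucc n =>
    rw [zpow_negSucc]
    exact econg_inv_one (pow_ne_zero _ hu0) (econg_pow_one h hu (n + 1)) (by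
      rw [← inv_pow]; exact hui.pow (n + 1))

lemma econg_q_zpow {m : ℕ} (hm : 1 < m) (z z' : ℤ) (h : (m : ℤ) ∣ z - z') :
    ECong (cyclotomic m (RatFunc ℚ)) ((RatFunc.X : RatFunc (RatFunc ℚ)) ^ z)
      ((RatFunc.X : RatFunc (RatFunc ℚ)) ^ z') := by
  set q : RatFunc (RatFunc ℚ) := RatFunc.X with hqdef
  have hq : q ≠ 0 := RatFunc.X_ne_zero
  obtain ⟨k, hk⟩ := h
  set u : RatFunc (RatFunc ℚ) := q ^ (m : ℤ) with hu
  have hu1 : ECong (cyclotomic m (RatFunc ℚ)) u 1 := by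
    rw [hu, zpow_natCast]; exact econg_q_pow_m_one hm
  have hau : Adm (cyclotomic m (RatFunc ℚ)) u := adm_q_zpow hm _
  have haui : Adm (cyclotomic m (RatFunc ℚ)) u⁻¹ := by
    rw [hu, ← zpow_neg]; exact adm_q_zpow hm _
  have hk1 : ECong (cyclotomic m (RatFunc ℚ)) (u ^ k) 1 :=
    econg_zpow_one (zpow_ne_zero _ hq) hu1 hau haui k
  have hzz : q ^ z = q ^ z' * u ^ k := by
    rw [hu, ← zpow_mul, ← zpow_add₀ hq]
    congr 1; omega
  rw [hzz]
  have := ECong.mul (ECong.refl (M := cyclotomic m (RatFunc ℚ)) (q ^ z')) hk1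
    (by rw [hu, ← zpow_mul]; exact adm_q_zpow hm _) (adm_q_zpow hm z')
  simpa using this

lemma adm_prod' {M : Polynomial (RatFunc ℚ)} (s : ℕ) (f : ℕ → RatFunc (RatFunc ℚ))
    (h : ∀ i < s, Adm M (f i)) : Adm M (∏ i ∈ range s, f i) := by
  induction s with
  | zero => simpa using (adm_one : Adm M 1)
  | succ n ih =>
    rw [Finset.prod_range_succ]
    exact (ih fun i hi => h i (by omega)).mul (h n (by omega))

lemma econg_prod {M : Polynomial (RatFunc ℚ)} (s : ℕ) (f g : ℕ → RatFunc (RatFunc ℚ))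
    (hfg : ∀ i < s, ECong M (f i) (g i)) (hf : ∀ i < s, Adm M (f i))
    (hg : ∀ i < s, Adm M (g i)) :
    ECong M (∏ i ∈ range s, f i) (∏ i ∈ range s, g i) := by
  induction s with
  | zero => simpa using ECong.refl (M := M) 1
  | succ n ih =>
    rw [Finset.prod_range_succ, Finset.prod_range_succ]
    exact ECong.mul (ih (fun i hi => hfg i (by omega)) (fun i hi => hf i (by omega))
        (fun i hi => hg i (by omega)))
      (hfg n (by omega)) (hf n (by omega))
      (adm_prod' n g fun i hi => hg i (by omega))

lemma prod_zpow_q (s : ℕ) (f : ℕ → ℤ) :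
    ∏ i ∈ range s, (RatFunc.X : RatFunc (RatFunc ℚ)) ^ (f i) =
      (RatFunc.X : RatFunc (RatFunc ℚ)) ^ (∑ i ∈ range s, f i) := by
  induction s with
  | zero => simp
  | succ n ih =>
    rw [Finset.prod_range_succ, Finset.sum_range_succ, ih, ← zpow_add₀ RatFunc.X_ne_zero]


lemma gauss_int (s : ℕ) : (∑ i ∈ range s, (i : ℤ)) * 2 = (s : ℤ) * ((s : ℤ) - 1) := by
  induction s with
  | zero => simp
  | succ n ih =>
    rw [Finset.sum_range_succ]
    push_cast
    push_cast at ih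
    linear_combination ih

end Stmt16Aux

end Aux

open Stmt16Aux in
/-- The key congruence in the proof of Lemma 1:
`(aq^t;q^d)_s / (q^d/a;q^d)_s ≡ (-a)^s q^{s(2t+ds-d)/2}` modulo `Φₘ(q)`. -/
theorem stmt16 (d : ℕ) (hd : 2 ≤ d) (m : ℕ) (hm : 1 < m) (s : ℕ) (t : ℤ)
    (hdt : Int.gcd (d : ℤ) t = 1) (hs : s ≤ m - 1)
    (hmod : (d : ℤ) * s ≡ -t [ZMOD (m : ℤ)]) :
    let q : RatFunc (RatFunc ℚ) := RatFunc.X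
    let a : RatFunc (RatFunc ℚ) := RatFunc.C RatFunc.X
    ratCongr2 (cyclotomic m (RatFunc ℚ))
      (qPoch (a * q ^ t) (q ^ (d : ℤ)) s / qPoch (q ^ (d : ℤ) / a) (q ^ (d : ℤ)) s -
        (-a) ^ s * q ^ ((s : ℤ) * (2 * t + (d : ℤ) * s - d) / 2)) := by
  intro q a
  set M := cyclotomic m (RatFunc ℚ) with hMdef
  have hq : q ≠ 0 := RatFunc.X_ne_zero
  have ha0 : (RatFunc.X : RatFunc ℚ) ≠ 0 := RatFunc.X_ne_zero
  have haι : a = ι (Polynomial.C (RatFunc.X : RatFunc ℚ)) := (RatFunc.algebraMap_C _).symm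
  have ha : a ≠ 0 := by
    rw [haι]; exact RatFunc.algebraMap_ne_zero (Polynomial.C_ne_zero.mpr ha0)
  -- the exponent
  set E : ℤ := (s : ℤ) * (2 * t + (d : ℤ) * s - d) / 2 with hEdef
  have hgauss : (∑ i ∈ range s, (i : ℤ)) * 2 = (s : ℤ) * ((s : ℤ) - 1) := gauss_int s
  have hsum : ∑ i ∈ range s, (t + (d : ℤ) * i) = (s : ℤ) * t + d * ∑ i ∈ range s, (i : ℤ) := by
    rw [Finset.sum_add_distrib, Finset.sum_const, Finset.mul_sum]
    simp [nsmul_eq_mul, mul_comm]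
  have hE : E = ∑ i ∈ range s, (t + (d : ℤ) * i) := by
    have h2 : (s : ℤ) * (2 * t + (d : ℤ) * s - d) = 2 * ∑ i ∈ range s, (t + (d : ℤ) * i) := by
      rw [hsum]
      linear_combination (-(d : ℤ)) * hgauss
    rw [hEdef, h2, Int.mul_ediv_cancel_left _ two_ne_zero]
  -- rewrite the two q-Pochhammers
  have hNeq : qPoch (a * q ^ t) (q ^ (d : ℤ)) s =
      ∏ i ∈ range s, (1 - a * q ^ (t + (d : ℤ) * i)) := by
    unfold qPoch
    refine Finset.prod_congr rfl fun i _ => ?_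
    rw [← zpow_natCast (q ^ (d : ℤ)) i, ← zpow_mul, mul_assoc, ← zpow_add₀ hq]
  have hDeq : qPoch (q ^ (d : ℤ) / a) (q ^ (d : ℤ)) s =
      ∏ i ∈ range s, (1 - a⁻¹ * q ^ ((d : ℤ) * (i + 1))) := by
    unfold qPoch
    refine Finset.prod_congr rfl fun i _ => ?_
    congr 1
    rw [← zpow_natCast (q ^ (d : ℤ)) i, ← zpow_mul, div_eq_mul_inv,
      mul_comm (q ^ (d : ℤ)) a⁻¹, mul_assoc, ← zpow_add₀ hq]
    congr 1
    push_cast; ring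
  set N := ∏ i ∈ range s, (1 - a * q ^ (t + (d : ℤ) * i)) with hNdef
  set D := ∏ i ∈ range s, (1 - a⁻¹ * q ^ ((d : ℤ) * (i + 1))) with hDdef
  set c := (-a) ^ s * q ^ E with hcdef
  -- D as image of a polynomial
  set Dp : Polynomial (RatFunc ℚ) :=
    ∏ i ∈ range s, (1 - Polynomial.C ((RatFunc.X : RatFunc ℚ)⁻¹) * X ^ (d * (i + 1)))
    with hDpdef
  have hDp : D = ι Dp := by
    rw [hDpdef, map_prod]
    refine Finset.prod_congr rfl fun i _ => ?_
    rw [map_sub, map_one, map_mul, map_pow, RatFunc.algebraMap_C, RatFunc.algebraMap_X]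
    have e1 : a⁻¹ = RatFunc.C ((RatFunc.X : RatFunc ℚ)⁻¹) := by
      show (RatFunc.C (RatFunc.X : RatFunc ℚ))⁻¹ = _
      rw [map_inv₀]
    have e2 : q ^ ((d : ℤ) * (i + 1)) = (RatFunc.X : RatFunc (RatFunc ℚ)) ^ (d * (i + 1) : ℕ) := by
      have hcast : ((d * (i + 1) : ℕ) : ℤ) = (d : ℤ) * (i + 1) := by push_cast; ring
      rw [← hcast, zpow_natCast]
    rw [e1, e2]
  have hDpcop : IsCoprime M Dp := by
    rw [hDpdef]
    exact IsCoprime.prod_right fun i _ => coprime_cyclo_factor hm (Nat.one_le_iff_ne_zero.mpr (Nat.mul_ne_zero (by omega) (by omega)))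
  have hDp0 : Dp ≠ 0 := by
    rw [hDpdef]
    refine Finset.prod_ne_zero_iff.mpr fun i _ => fun h0 => ?_
    have := congrArg (Polynomial.eval (0 : RatFunc ℚ)) h0
    have hdp : d * (i + 1) ≠ 0 := Nat.mul_ne_zero (by omega) (by omega)
    simp [zero_pow hdp] at this
  have hD0 : D ≠ 0 := by rw [hDp]; exact RatFunc.algebraMap_ne_zero hDp0
  -- the product P
  set P := ∏ i ∈ range s, (q ^ (t + (d : ℤ) * s) - a * q ^ (t + (d : ℤ) * i)) with hPdef
  -- c = ∏ (-(a q^{t+di}))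
  have hc : c = ∏ i ∈ range s, (-(a * q ^ (t + (d : ℤ) * i))) := by
    have : ∀ i, -(a * q ^ (t + (d : ℤ) * i)) = (-a) * q ^ (t + (d : ℤ) * i) := fun i => by ring
    simp_rw [this]
    rw [Finset.prod_mul_distrib, Finset.prod_const, prod_zpow_q, Finset.card_range, ← hE, hcdef]
  -- P = c * D
  have hPcD : P = c * D := by
    rw [hc, hDdef, ← Finset.prod_range_reflect (fun i => (1 - a⁻¹ * q ^ ((d : ℤ) * (i + 1)))) s,
      ← Finset.prod_mul_distrib, hPdef]
    refine Finset.prod_congr rfl fun i hi => ?_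
    symm
    have hi' : i < s := Finset.mem_range.mp hi
    have hcast : ((d : ℤ) * ((s - 1 - i : ℕ) + 1)) = (d : ℤ) * s - d * i := by
      have h1 : ((s - 1 - i : ℕ) : ℤ) = (s : ℤ) - 1 - i := by omega
      rw [h1]; ring
    rw [hcast]
    have hmain : a * q ^ (t + (d : ℤ) * i) * (a⁻¹ * q ^ ((d : ℤ) * s - d * i)) =
        q ^ (t + (d : ℤ) * s) := by
      rw [mul_mul_mul_comm, mul_inv_cancel₀ ha, one_mul, ← zpow_add₀ hq]
      congr 1; ring
    calc -(a * q ^ (t + (d : ℤ) * i)) * (1 - a⁻¹ * q ^ ((d : ℤ) * s - d * i))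
        = a * q ^ (t + (d : ℤ) * i) * (a⁻¹ * q ^ ((d : ℤ) * s - d * i))
          - a * q ^ (t + (d : ℤ) * i) := by ring
      _ = q ^ (t + (d : ℤ) * s) - a * q ^ (t + (d : ℤ) * i) := by rw [hmain]
  -- admissibility helpers
  have hAa : Adm M a := by rw [haι]; exact adm_map _
  have hAqz : ∀ z : ℤ, Adm M (q ^ z) := fun z => adm_q_zpow hm z
  have hAf : ∀ i < s, Adm M (1 - a * q ^ (t + (d : ℤ) * i)) := fun i _ =>
    adm_one.sub (hAa.mul (hAqz _))
  have hAg : ∀ i < s, Adm M (q ^ (t + (d : ℤ) * s) - a * q ^ (t + (d : ℤ) * i)) := fun i _ =>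
    (hAqz _).sub (hAa.mul (hAqz _))
  -- key congruence N ≡ P
  have hdvd : (m : ℤ) ∣ (0 - (t + (d : ℤ) * s)) := by
    have h := hmod.dvd
    have heq : (0 - (t + (d : ℤ) * s)) = -t - (d : ℤ) * s := by ring
    rw [heq]
    exact h
  have hkey : ECong M N P := by
    rw [hNdef, hPdef]
    refine econg_prod s _ _ (fun i hi => ?_) hAf hAg
    show ratCongr2 M _
    have h1 := econg_q_zpow hm 0 (t + (d : ℤ) * s) hdvd
    show ratCongr2 M ((1 - a * q ^ (t + (d : ℤ) * i)) -
      (q ^ (t + (d : ℤ) * s) - a * q ^ (t + (d : ℤ) * i)))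
    have heq : (1 - a * q ^ (t + (d : ℤ) * i)) -
        (q ^ (t + (d : ℤ) * s) - a * q ^ (t + (d : ℤ) * i)) =
        q ^ (0 : ℤ) - q ^ (t + (d : ℤ) * s) := by
      rw [zpow_zero]; ring
    rw [heq]
    exact h1
  -- finish
  rw [hNeq, hDeq]
  have hsplit : N / D - c = (N - c * D) * D⁻¹ := by
    rw [sub_mul, div_eq_mul_inv, mul_assoc, mul_inv_cancel₀ hD0, mul_one]
  rw [hsplit]
  have hNP : ratCongr2 M (N - c * D) := by rw [← hPcD]; exact hkey
  refine rc_mul_adm hNP ?_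
  rw [hDp]
  exact adm_inv Dp hDpcop hDp0
end
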